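/- Let d : ℝ → ℝ be an additive function, let r ∈ ℚ with r ≠ 0 and r ≠ 1, and let I ⊆ D_r be a nonempty open interval. Then d is a standard derivation if and only if d(x^r) = r·x^{r-1}·d(x) holds for all x ∈ I. -/

import Mathlib

/-- The domain `D_r` of the power function `x ↦ x^r` for a rational exponent `r = m/n`
(in lowest terms, `n > 0`). -/
def qdom (r : ℚ) : Set ℝ :=
  if Odd r.den then
    (if 0 ≤ r.num then Set.univ else {(0 : ℝ)}ᶜ)
  else
    (if 0 ≤ r.num then Set.Ici 0 else Set.Ioi 0)

/-- The real power function `x ↦ x^r` with rational exponent `r = m/n` (in lowest terms);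
for `x < 0` (and `n` odd) it is the real `n`-th root of `x^m`. -/
noncomputable def qpow (x : ℝ) (r : ℚ) : ℝ :=
  if 0 ≤ x then x ^ (r : ℝ)
  else if Odd r.num then -((-x) ^ (r : ℝ)) else (-x) ^ (r : ℝ)

open Polynomial Finset



open Polynomial Finset

lemma d_zero (d : ℝ → ℝ) (hd : ∀ x y : ℝ, d (x + y) = d x + d y) : d 0 = 0 := by
  have := hd 0 0; simp at this; linarith [this]

lemma d_rat (d : ℝ → ℝ) (hd : ∀ x y : ℝ, d (x + y) = d x + d y) (c : ℚ) (y : ℝ) :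
    d ((c:ℝ) * y) = c * d y := by
  have := map_ratCast_smul (AddMonoidHom.mk' d hd) ℝ ℝ c y
  simpa [smul_eq_mul] using this

lemma d_sum (d : ℝ → ℝ) (hd : ∀ x y : ℝ, d (x + y) = d x + d y)
    {ι : Type*} (s : Finset ι) (f : ι → ℝ) : d (∑ i ∈ s, f i) = ∑ i ∈ s, d (f i) := by
  classical
  induction s using Finset.induction_on with
  | empty => simpa using d_zero d hd
  | insert a s hnotmem ih => rw [Finset.sum_insert hnotmem, hd, ih, Finset.sum_insert hnotmem]

lemma d_neg (d : ℝ → ℝ) (hd : ∀ x y : ℝ, d (x + y) = d x + d y) (y : ℝ) : d (-y) = - d y := by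
  have := hd y (-y); simp [d_zero d hd] at this; linarith

lemma hco (L : ℕ) (f : ℕ → ℝ) (e : ℕ) :
    (∑ k ∈ Finset.range (L+1), C (f k) * X^(L-k)).coeff e = if e ≤ L then f (L-e) else 0 := by
  rw [Polynomial.finset_sum_coeff]
  by_cases he : e ≤ L
  · rw [if_pos he, Finset.sum_eq_single (L - e)]
    · rw [Polynomial.coeff_C_mul, Polynomial.coeff_X_pow, if_pos (by omega), mul_one]
    · intro k hk hne
      rw [Polynomial.coeff_C_mul, Polynomial.coeff_X_pow, if_neg, mul_zero]
      have := Finset.mem_range.mp hk; omega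
    · intro habs; exact absurd (Finset.mem_range.mpr (by omega)) habs
  · rw [if_neg he]
    apply Finset.sum_eq_zero
    intro k hk
    rw [Polynomial.coeff_C_mul, Polynomial.coeff_X_pow, if_neg (by omega), mul_zero]


open Polynomial Finset


lemma expand (d : ℝ → ℝ) (hd : ∀ x y : ℝ, d (x + y) = d x + d y) (t : ℝ) (L : ℕ) (q : ℚ) :
    d ((t + (q:ℝ))^L) = ∑ k ∈ range (L+1), (L.choose k : ℝ) * (q:ℝ)^(L-k) * d (t^k) := by
  rw [add_pow, d_sum d hd]
  apply Finset.sum_congr rfl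
  intro k _
  have h1 : t ^ k * (q:ℝ) ^ (L - k) * ((L.choose k : ℕ) : ℝ)
      = ((q ^ (L-k) * (L.choose k : ℚ) : ℚ) : ℝ) * t ^ k := by push_cast; ring
  rw [h1, d_rat d hd]
  push_cast; ring

lemma polyid (d : ℝ → ℝ) (hd : ∀ x y : ℝ, d (x + y) = d x + d y)
    (M N : ℕ) (t : ℝ) (ht : t ≠ 0)
    (h : ∀ s : ℝ, s ≠ 0 → (N:ℝ) * d (s^M) = (M:ℝ) * s^(M-N) * d (s^N)) :
    (∑ k ∈ range (M+1), C ((N:ℝ) * (M.choose k : ℝ) * d (t^k)) * X^(M-k))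
    = (∑ s ∈ range (M-N+1), C (t^s * ((M-N).choose s : ℝ)) * X^(M-N-s)) *
      (∑ j ∈ range (N+1), C ((M:ℝ) * (N.choose j : ℝ) * d (t^j)) * X^(N-j)) := by
  apply Polynomial.eq_of_infinite_eval_eq
  apply Set.Infinite.mono (s := Set.range ((↑) : ℚ → ℝ) \ {-t})
  swap
  · exact (Set.infinite_range_of_injective Rat.cast_injective).diff (Set.finite_singleton _)
  rintro x ⟨⟨q, rfl⟩, hq⟩
  have hne : t + (q:ℝ) ≠ 0 := by
    intro h0
    apply hq
    simp only [Set.mem_singleton_iff]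
    linarith
  simp only [Set.mem_setOf_eq, eval_mul, Polynomial.eval_finset_sum, eval_mul, eval_C, eval_pow,
    eval_X]
  have e1 : ∑ k ∈ range (M+1), (N:ℝ) * (M.choose k : ℝ) * d (t^k) * (q:ℝ)^(M-k)
      = (N:ℝ) * d ((t + (q:ℝ))^M) := by
    rw [expand d hd, Finset.mul_sum]
    apply Finset.sum_congr rfl; intro k _; ring
  have e2 : ∑ s ∈ range (M-N+1), t^s * ((M-N).choose s : ℝ) * (q:ℝ)^(M-N-s)
      = (t + (q:ℝ))^(M-N) := by
    rw [add_pow]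
    apply Finset.sum_congr rfl; intro k _; ring
  have e3 : ∑ j ∈ range (N+1), (M:ℝ) * (N.choose j : ℝ) * d (t^j) * (q:ℝ)^(N-j)
      = (M:ℝ) * d ((t + (q:ℝ))^N) := by
    rw [expand d hd, Finset.mul_sum]
    apply Finset.sum_congr rfl; intro k _; ring
  rw [e1, e2, e3, h (t + (q:ℝ)) hne]; ring


open Polynomial Finset


lemma key (d : ℝ → ℝ) (hd : ∀ x y : ℝ, d (x + y) = d x + d y)
    (M N : ℕ) (h1 : 1 ≤ N) (hNM : N < M)
    (h : ∀ s : ℝ, s ≠ 0 → (N:ℝ) * d (s^M) = (M:ℝ) * s^(M-N) * d (s^N)) :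
    ∀ t : ℝ, d (t^2) = 2 * t * d t := by
  classical
  have cofeq : ∀ (t : ℝ), t ≠ 0 → ∀ e : ℕ,
      (if e ≤ M then (N:ℝ) * (M.choose (M-e) : ℝ) * d (t^(M-e)) else 0)
      = ∑ u ∈ range (e+1),
          (if u ≤ M-N then t^(M-N-u) * ((M-N).choose (M-N-u) : ℝ) else 0) *
          (if e-u ≤ N then (M:ℝ) * (N.choose (N-(e-u)) : ℝ) * d (t^(N-(e-u))) else 0) := by
    intro t ht e
    have pid := polyid d hd M N t ht h
    have hc := congrArg (fun p : Polynomial ℝ => p.coeff e) pid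
    rw [hco, Polynomial.coeff_mul, Finset.Nat.sum_antidiagonal_eq_sum_range_succ_mk] at hc
    rw [hc]
    apply Finset.sum_congr rfl
    intro u _
    rw [hco, hco]
  -- extraction at e = M-1 : gives d 1 = 0
  have ext1 : ∀ (t : ℝ), t ≠ 0 → t * ((M-N : ℕ) : ℝ) * ((M:ℝ) * d 1) = 0 := by
    intro t ht
    have hc := cofeq t ht (M-1)
    have hL1 : M - (M-1) = 1 := by omega
    rw [if_pos (by omega), hL1] at hc
    have hpt : ∀ u ∈ range (M-1+1),
        (if u ≤ M-N then t^(M-N-u) * ((M-N).choose (M-N-u) : ℝ) else 0) *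
        (if (M-1)-u ≤ N then (M:ℝ) * (N.choose (N-((M-1)-u)) : ℝ) * d (t^(N-((M-1)-u))) else 0)
        = (if u = M-N then (M:ℝ) * (N:ℝ) * d t else 0)
          + (if u = M-N-1 then t * ((M-N : ℕ) : ℝ) * ((M:ℝ) * d 1) else 0) := by
      intro u hu
      have hu' : u ≤ M-1 := by have := Finset.mem_range.mp hu; omega
      by_cases c1 : u = M-N
      · subst c1
        have e1 : M-N-(M-N) = 0 := by omega
        have e2 : (M-1)-(M-N) = N-1 := by omega
        have e3 : N-(N-1) = 1 := by omega
        rw [if_pos le_rfl, if_pos (by omega), e1, e2, e3, if_pos rfl, if_neg (by omega)]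
        simp [Nat.choose_one_right]
      · by_cases c2 : u = M-N-1
        · subst c2
          have e1 : M-N-(M-N-1) = 1 := by omega
          have e2 : (M-1)-(M-N-1) = N := by omega
          have e3 : N-N = 0 := by omega
          rw [if_pos (by omega), if_pos (by omega), e1, e2, e3, if_neg c1, if_pos rfl]
          simp [Nat.choose_one_right]
        · rw [if_neg c1, if_neg c2]
          by_cases c3 : u ≤ M-N
          · rw [if_pos c3, if_neg (show ¬((M-1)-u ≤ N) by omega)]
            simp
          · rw [if_neg c3]
            simp
    rw [Finset.sum_congr rfl hpt, Finset.sum_add_distrib,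
      Finset.sum_ite_eq' (range (M-1+1)) (M-N) (fun _ => (M:ℝ) * (N:ℝ) * d t),
      Finset.sum_ite_eq' (range (M-1+1)) (M-N-1) (fun _ => t * ((M-N : ℕ) : ℝ) * ((M:ℝ) * d 1))] at hc
    rw [if_pos (by simp [Finset.mem_range]; omega), if_pos (by simp [Finset.mem_range]; omega)] at hc
    rw [Nat.choose_one_right, pow_one] at hc
    push_cast at hc ⊢
    linarith
  have d1 : d 1 = 0 := by
    have := ext1 1 one_ne_zero
    have hMN0 : ((M-N : ℕ) : ℝ) ≠ 0 := by
      have : M - N ≠ 0 := by omega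
      exact_mod_cast Nat.cast_ne_zero.mpr this
    have hM0 : (M:ℝ) ≠ 0 := by
      exact_mod_cast Nat.cast_ne_zero.mpr (by omega : M ≠ 0)
    have h3 : ((M-N : ℕ) : ℝ) * (M:ℝ) * d 1 = 0 := by linear_combination this
    rcases mul_eq_zero.mp h3 with h4 | h4
    · exact absurd h4 (mul_ne_zero hMN0 hM0)
    · exact h4
  -- extraction at e = M-2 : gives d (t^2) = 2 t d t
  have ext2 : ∀ (t : ℝ), t ≠ 0 → d (t^2) = 2 * t * d t := by
    intro t ht
    have hc := cofeq t ht (M-2)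
    have hL1 : M - (M-2) = 2 := by omega
    rw [if_pos (by omega), hL1] at hc
    have hpt : ∀ u ∈ range (M-2+1),
        (if u ≤ M-N then t^(M-N-u) * ((M-N).choose (M-N-u) : ℝ) else 0) *
        (if (M-2)-u ≤ N then (M:ℝ) * (N.choose (N-((M-2)-u)) : ℝ) * d (t^(N-((M-2)-u))) else 0)
        = (if u = M-N then (M:ℝ) * (N.choose 2 : ℝ) * d (t^2) else 0)
          + (if u = M-N-1 then t * ((M-N : ℕ) : ℝ) * ((M:ℝ) * (N:ℝ) * d t) else 0) := by
      intro u hu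
      have hu' : u ≤ M-2 := by have := Finset.mem_range.mp hu; omega
      by_cases c1 : u = M-N
      · subst c1
        have hN2 : 2 ≤ N := by omega
        have e1 : M-N-(M-N) = 0 := by omega
        have e2 : (M-2)-(M-N) = N-2 := by omega
        have e3 : N-(N-2) = 2 := by omega
        rw [if_pos le_rfl, if_pos (by omega), e1, e2, e3, if_pos rfl, if_neg (by omega)]
        simp
      · by_cases c2 : u = M-N-1
        · subst c2
          have e1 : M-N-(M-N-1) = 1 := by omega
          have e2 : (M-2)-(M-N-1) = N-1 := by omega
          have e3 : N-(N-1) = 1 := by omega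
          rw [if_pos (by omega), if_pos (by omega), e1, e2, e3, if_neg c1, if_pos rfl]
          simp [Nat.choose_one_right]
        · rw [if_neg c1, if_neg c2]
          by_cases c3 : u ≤ M-N
          · by_cases c4 : (M-2)-u ≤ N
            · have e2 : N-((M-2)-u) = 0 := by omega
              rw [if_pos c3, if_pos c4, e2]
              simp [d1]
            · rw [if_pos c3, if_neg c4]
              simp
          · rw [if_neg c3]
            simp
    rw [Finset.sum_congr rfl hpt, Finset.sum_add_distrib,
      Finset.sum_ite_eq' (range (M-2+1)) (M-N) (fun _ => (M:ℝ) * (N.choose 2 : ℝ) * d (t^2)),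
      Finset.sum_ite_eq' (range (M-2+1)) (M-N-1)
        (fun _ => t * ((M-N : ℕ) : ℝ) * ((M:ℝ) * (N:ℝ) * d t))] at hc
    have hfirst : (if M-N ∈ range (M-2+1) then (M:ℝ) * (N.choose 2 : ℝ) * d (t^2) else 0)
        = (M:ℝ) * (N.choose 2 : ℝ) * d (t^2) := by
      by_cases hN2 : 2 ≤ N
      · rw [if_pos (by simp [Finset.mem_range]; omega)]
      · have hN1 : N = 1 := by omega
        subst hN1
        rw [Nat.choose_eq_zero_of_lt (by norm_num)]
        simp
    have hsecond : (if M-N-1 ∈ range (M-2+1) then t * ((M-N : ℕ) : ℝ) * ((M:ℝ) * (N:ℝ) * d t) else 0)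
        = t * ((M-N : ℕ) : ℝ) * ((M:ℝ) * (N:ℝ) * d t) := by
      rw [if_pos (by simp [Finset.mem_range]; omega)]
    rw [hfirst, hsecond] at hc
    -- now hc : N * choose M 2 * d (t^2) = M * choose N 2 * d (t^2) + t * (M-N) * (M*N*d t)
    rw [Nat.cast_choose_two, Nat.cast_choose_two, Nat.cast_sub (le_of_lt hNM)] at hc
    have hMR : (1:ℝ) ≤ (M:ℝ) := by exact_mod_cast hNM.le.trans' h1
    have hNR : (1:ℝ) ≤ (N:ℝ) := by exact_mod_cast h1
    have hMNR : (N:ℝ) < (M:ℝ) := by exact_mod_cast hNM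
    have hA : (0:ℝ) < (M:ℝ) * (N:ℝ) * ((M:ℝ) - (N:ℝ)) / 2 := by
      apply div_pos _ (by norm_num)
      apply mul_pos (mul_pos (by linarith) (by linarith)) (by linarith)
    have hmain : (M:ℝ) * (N:ℝ) * ((M:ℝ) - (N:ℝ)) / 2 * d (t^2)
        = (M:ℝ) * (N:ℝ) * ((M:ℝ) - (N:ℝ)) / 2 * (2 * t * d t) := by
      linear_combination hc
    exact mul_left_cancel₀ (ne_of_gt hA) hmain
  intro t
  by_cases ht : t = 0
  · subst ht
    simpa using d_zero d hd
  · exact ext2 t ht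


/-- the zpow-level relation -/
def ZRel (d : ℝ → ℝ) (m n : ℤ) : Prop :=
  ∀ t : ℝ, t ≠ 0 → (n:ℝ) * d (t^m) = (m:ℝ) * t^(m-n) * d (t^n)

lemma flipR (d : ℝ → ℝ) (m n : ℤ) (h : ZRel d m n) : ZRel d n m := by
  intro t ht
  have h1 := h t ht
  have h2 : t^(m-n) * t^(n-m) = 1 := by
    rw [← zpow_add₀ ht]; norm_num
  calc (m:ℝ) * d (t^n) = t^(n-m) * ((m:ℝ) * t^(m-n) * d (t^n)) := by
        rw [show t^(n-m) * ((m:ℝ) * t^(m-n) * d (t^n)) = (m:ℝ) * (t^(m-n) * t^(n-m)) * d (t^n) by ring, h2]; ring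
    _ = t^(n-m) * ((n:ℝ) * d (t^m)) := by rw [h1]
    _ = (n:ℝ) * t^(n-m) * d (t^m) := by ring

lemma ZposGT (d : ℝ → ℝ) (hd : ∀ x y : ℝ, d (x + y) = d x + d y)
    (m n : ℤ) (h1 : 1 ≤ n) (hlt : n < m) (h : ZRel d m n) :
    ∀ t : ℝ, d (t^2) = 2 * t * d t := by
  set M := m.toNat with hM
  set N := n.toNat with hN
  have hmM : (M:ℤ) = m := Int.toNat_of_nonneg (by omega)
  have hnN : (N:ℤ) = n := Int.toNat_of_nonneg (by omega)
  apply key d hd M N (by omega) (by omega)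
  intro s hs
  have h2 := h s hs
  have e1 : s^m = s^M := by rw [← hmM, zpow_natCast]
  have e2 : s^n = s^N := by rw [← hnN, zpow_natCast]
  have e3 : s^(m-n) = s^(M-N) := by
    rw [show m - n = ((M - N : ℕ) : ℤ) by omega, zpow_natCast]
  rw [e1, e2, e3] at h2
  rw [show ((N:ℕ):ℝ) = ((n:ℤ):ℝ) by rw [← hnN]; push_cast; ring,
    show ((M:ℕ):ℝ) = ((m:ℤ):ℝ) by rw [← hmM]; push_cast; ring]
  exact h2

lemma Zpos (d : ℝ → ℝ) (hd : ∀ x y : ℝ, d (x + y) = d x + d y)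
    (a b : ℤ) (ha : 1 ≤ a) (hb : 1 ≤ b) (hab : a ≠ b) (h : ZRel d a b) :
    ∀ t : ℝ, d (t^2) = 2 * t * d t := by
  rcases lt_or_gt_of_ne hab with hlt | hgt
  · exact ZposGT d hd b a ha hlt (flipR d a b h)
  · exact ZposGT d hd a b hb hgt h

lemma Zsq (d : ℝ → ℝ) (m n : ℤ) (h : ZRel d m n) : ZRel d (m*m) (n*n) := by
  intro t ht
  have A := h (t^m) (zpow_ne_zero m ht)
  have B := h (t^n) (zpow_ne_zero n ht)
  rw [← zpow_mul, ← zpow_mul, ← zpow_mul] at A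
  rw [← zpow_mul, ← zpow_mul, ← zpow_mul] at B
  have hB' : (n:ℝ) * d (t^(m*n)) = (m:ℝ) * t^(n*(m-n)) * d (t^(n*n)) := by
    rw [mul_comm m n]; exact B
  have hx : t^(m*(m-n)) * t^(n*(m-n)) = t^(m*m-n*n) := by
    rw [← zpow_add₀ ht]
    congr 1
    ring
  push_cast
  rw [← hx]
  linear_combination (n:ℝ) * A + (m:ℝ) * t^(m*(m-n)) * hB'


lemma recip (d : ℝ → ℝ) (hd : ∀ x y : ℝ, d (x + y) = d x + d y)
    (h : ∀ t : ℝ, t ≠ 0 → d t⁻¹ = -((t^2)⁻¹) * d t) :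
    ∀ t : ℝ, d (t^2) = 2 * t * d t := by
  have d1 : d 1 = 0 := by
    have := h 1 one_ne_zero
    norm_num at this
    linarith
  have drat : ∀ (c : ℚ) (y : ℝ), d ((c:ℝ) * y) = c * d y := d_rat d hd
  intro t
  by_cases ht : t = 0
  · subst ht; simpa using d_zero d hd
  set q : ℚ := if t = -1 then 2 else 1 with hqdef
  have hq0 : (q:ℝ) ≠ 0 := by
    rcases ite_eq_or_eq (t = -1) (2:ℚ) 1 with h' | h' <;> rw [hqdef, h'] <;> norm_num
  have htq : t + (q:ℝ) ≠ 0 := by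
    by_cases hc : t = -1
    · rw [hqdef, if_pos hc, hc]; norm_num
    · rw [hqdef, if_neg hc]
      push_cast
      intro habs
      apply hc
      linarith
  have hprod : t * (t + (q:ℝ)) ≠ 0 := mul_ne_zero ht htq
  -- the key real identity
  have idty : t⁻¹ = (t + (q:ℝ))⁻¹ + (q:ℝ) * (t * (t + (q:ℝ)))⁻¹ := by
    field_simp
  have dq : d (q:ℝ) = 0 := by
    have := drat q 1
    rw [mul_one] at this
    rw [this, d1, mul_zero]
  have dtq : d (t + (q:ℝ)) = d t := by rw [hd, dq, add_zero]
  have dtt : d (t * (t + (q:ℝ))) = d (t^2) + q * d t := by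
    have e : t * (t + (q:ℝ)) = t^2 + (q:ℝ) * t := by ring
    rw [e, hd, drat]
  have main : d t⁻¹ = d (t + (q:ℝ))⁻¹ + q * d ((t * (t + (q:ℝ)))⁻¹) := by
    rw [idty, hd, drat]
  rw [h t ht, h _ htq, h _ hprod, dtq, dtt] at main
  -- multiply out: main is an equation over ℝ; clear denominators
  have hts : (t^2 : ℝ) ≠ 0 := pow_ne_zero 2 ht
  have htqs : ((t + (q:ℝ))^2 : ℝ) ≠ 0 := pow_ne_zero 2 htq
  have hps : ((t * (t + (q:ℝ)))^2 : ℝ) ≠ 0 := pow_ne_zero 2 hprod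
  field_simp at main
  have hfac : (q:ℝ) * (t^2*(t + (q:ℝ))^2) * (d (t^2) - 2*t*d t) = 0 := by
    linear_combination (t^2*(t + (q:ℝ))^2) * main
  rcases mul_eq_zero.mp hfac with h1 | h1
  · exact absurd h1 (mul_ne_zero hq0 (mul_ne_zero hts htqs))
  · linarith


lemma polarize (d : ℝ → ℝ) (hd : ∀ x y : ℝ, d (x + y) = d x + d y)
    (hsq : ∀ t : ℝ, d (t^2) = 2 * t * d t) :
    ∀ x y : ℝ, d (x * y) = d x * y + x * d y := by
  intro x y
  have A : d ((x+y)^2) = 2*(x+y)*(d x + d y) := by rw [hsq, hd]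
  have B : d ((x+y)^2) = d (x^2) + 2*d (x*y) + d (y^2) := by
    have e : (x+y)^2 = x^2 + (((2:ℚ):ℝ) * (x*y) + y^2) := by push_cast; ring
    rw [e, hd, hd, d_rat d hd]
    push_cast
    ring
  linear_combination (A - B - hsq x - hsq y)/2

lemma back (d : ℝ → ℝ) (hd : ∀ x y : ℝ, d (x + y) = d x + d y)
    (m n : ℤ) (hn : 1 ≤ n) (hm : m ≠ 0) (hmn : m ≠ n) (hcop : m = -n → n = 1)
    (hZ : ZRel d m n) :
    ∀ x y : ℝ, d (x * y) = d x * y + x * d y := by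
  apply polarize d hd
  by_cases hmpos : 0 < m
  · exact Zpos d hd m n (by omega) hn hmn hZ
  · have hmneg : m < 0 := by omega
    by_cases hneg : m = -n
    · have hn1 : n = 1 := hcop hneg
      have hm1 : m = -1 := by omega
      apply recip d hd
      intro t ht
      have := hZ t ht
      rw [hn1, hm1] at this
      norm_num at this
      rw [this]
      exact (neg_mul _ _).symm
    · apply Zpos d hd (m*m) (n*n) (by nlinarith) (by nlinarith) _ (Zsq d m n hZ)
      intro habs
      rcases mul_self_eq_mul_self_iff.mp habs with h' | h'
      · exact hmn h'
      · exact hneg h'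


lemma rsub1 (r : ℚ) : (r - 1).num = r.num - r.den ∧ (r - 1).den = r.den := by
  have hd0 : r.den ≠ 0 := r.den_pos.ne'
  have hcop : (r.num - (r.den:ℤ)).natAbs.Coprime r.den := by
    have h1 : IsCoprime r.num (r.den:ℤ) := by
      rw [Int.isCoprime_iff_gcd_eq_one]
      exact r.reduced
    have h2 : IsCoprime (r.num - (r.den:ℤ)) (r.den:ℤ) := by
      have := IsCoprime.add_mul_left_left h1 (-1)
      have e : r.num + (r.den:ℤ) * (-1) = r.num - r.den := by ring
      rwa [e] at this
    rw [Int.isCoprime_iff_gcd_eq_one] at h2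
    exact h2
  have heq : r - 1 = (⟨r.num - r.den, r.den, hd0, hcop⟩ : ℚ) := by
    rw [Rat.mk_eq_divInt, Rat.divInt_eq_div]
    push_cast
    have hdQ : ((r.den:ℚ)) ≠ 0 := by exact_mod_cast hd0
    rw [eq_div_iff hdQ, sub_mul, one_mul]
    rw [Rat.mul_den_eq_num]
  exact ⟨by rw [heq], by rw [heq]⟩

lemma qdom_neg_odd (r : ℚ) (x : ℝ) (hx : x ∈ qdom r) (h : x < 0) : Odd r.den := by
  by_contra hodd
  unfold qdom at hx
  rw [if_neg hodd] at hx
  by_cases h2 : 0 ≤ r.num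
  · rw [if_pos h2] at hx; exact absurd hx (by simpa using not_le.mpr h)
  · rw [if_neg h2] at hx; exact absurd hx (by simp [Set.mem_Ioi]; linarith)

lemma qdom_zero (r : ℚ) (hx : (0:ℝ) ∈ qdom r) : 0 ≤ r.num := by
  by_contra h2
  unfold qdom at hx
  by_cases hodd : Odd r.den
  · rw [if_pos hodd, if_neg (by omega)] at hx; simp at hx
  · rw [if_neg hodd, if_neg (by omega)] at hx; simp [Set.mem_Ioi] at hx

/-- canonical signed n-th root -/
noncomputable def croot (x : ℝ) (n : ℕ) : ℝ :=
  if 0 ≤ x then x ^ ((n:ℝ)⁻¹) else -((-x) ^ ((n:ℝ)⁻¹))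

lemma croot_ne_zero (x : ℝ) (n : ℕ) (hx : x ≠ 0) (hn : n ≠ 0) : croot x n ≠ 0 := by
  unfold croot
  rcases lt_or_gt_of_ne hx with h | h
  · rw [if_neg (not_le.mpr h)]
    have : (0:ℝ) < (-x) ^ ((n:ℝ)⁻¹) := Real.rpow_pos_of_pos (by linarith) _
    intro habs; rw [neg_eq_zero] at habs; linarith
  · rw [if_pos h.le]
    exact (Real.rpow_pos_of_pos h _).ne'

lemma croot_zpow_nat (x : ℝ) (n : ℕ) (hx : 0 ≤ x) : croot x n ^ ((n:ℤ)) = x ^ ((n:ℝ)⁻¹ * n) := by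
  unfold croot
  rw [if_pos hx, Real.rpow_mul hx, zpow_natCast, ← Real.rpow_natCast (x ^ ((n:ℝ)⁻¹)) n]

lemma croot_pow (x : ℝ) (n : ℕ) (hn : n ≠ 0) (hodd : x < 0 → Odd n) : croot x n ^ n = x := by
  unfold croot
  by_cases hx : 0 ≤ x
  · rw [if_pos hx]; exact Real.rpow_inv_natCast_pow hx hn
  · push_neg at hx
    rw [if_neg (not_le.mpr hx), (hodd hx).neg_pow,
      Real.rpow_inv_natCast_pow (by linarith) hn, neg_neg]


/-- rpow of a rational as a zpow of the root, for nonneg base -/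
lemma rpow_rat_eq (z : ℝ) (hz : 0 ≤ z) (s : ℚ) :
    z ^ (s:ℝ) = (z ^ ((s.den:ℝ)⁻¹)) ^ s.num := by
  have hd : ((s.den:ℝ)) ≠ 0 := by
    exact_mod_cast s.den_pos.ne'
  have e : (s:ℝ) = (s.den:ℝ)⁻¹ * (s.num:ℝ) := by
    rw [Rat.cast_def]; field_simp
  rw [e, Real.rpow_mul hz, Real.rpow_intCast]

/-- qpow as zpow of the canonical root -/
lemma qpow_eq_zpow (x : ℝ) (s : ℚ) (hodd : x < 0 → Odd s.den) :
    qpow x s = (croot x s.den) ^ s.num := by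
  unfold qpow croot
  by_cases hx : 0 ≤ x
  · rw [if_pos hx, if_pos hx, rpow_rat_eq x hx s]
  · push_neg at hx
    rw [if_neg (not_le.mpr hx), if_neg (not_le.mpr hx)]
    have hnx : (0:ℝ) ≤ -x := by linarith
    by_cases hop : Odd s.num
    · rw [if_pos hop, hop.neg_zpow, rpow_rat_eq (-x) hnx s]
    · rw [if_neg hop, (Int.not_odd_iff_even.mp hop).neg_zpow, rpow_rat_eq (-x) hnx s]

/-- the canonical root of u^n is u or -u -/
lemma croot_of_pow (u : ℝ) (n : ℕ) (hu : u ≠ 0) (hn : n ≠ 0) :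
    croot (u^n) n = u ∨ croot (u^n) n = -u := by
  unfold croot
  rcases lt_or_gt_of_ne hu with hneg | hpos
  · by_cases hodd : Odd n
    · left
      have h1 : u^n < 0 := hodd.pow_neg hneg
      rw [if_neg (not_le.mpr h1)]
      have h2 : -(u^n) = (-u)^n := by rw [hodd.neg_pow]
      rw [h2, Real.pow_rpow_inv_natCast (by linarith) hn, neg_neg]
    · right
      have heven : Even n := Nat.not_odd_iff_even.mp hodd
      have h1 : 0 < u^n := heven.pow_pos hneg.ne
      rw [if_pos h1.le]
      have h2 : u^n = (-u)^n := (heven.neg_pow u).symm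
      rw [h2, Real.pow_rpow_inv_natCast (by linarith) hn]
  · left
    have h1 : 0 < u^n := pow_pos hpos n
    rw [if_pos h1.le, Real.pow_rpow_inv_natCast hpos.le hn]


lemma der_one (d : ℝ → ℝ) (hder : ∀ x y : ℝ, d (x * y) = d x * y + x * d y) : d 1 = 0 := by
  have := hder 1 1
  simp at this
  linarith

lemma der_pow (d : ℝ → ℝ) (hder : ∀ x y : ℝ, d (x * y) = d x * y + x * d y) (y : ℝ) :
    ∀ k : ℕ, d (y^(k+1)) = (k+1 : ℝ) * y^k * d y := by
  intro k
  induction k with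
  | zero => simp
  | succ k ih =>
      have e : y^(k+2) = y^(k+1) * y := by ring
      rw [e, hder, ih]
      push_cast
      ring

lemma der_zpow (d : ℝ → ℝ) (hder : ∀ x y : ℝ, d (x * y) = d x * y + x * d y)
    (y : ℝ) (hy : y ≠ 0) (j : ℤ) : d (y^j) = (j:ℝ) * y^(j-1) * d y := by
  induction j using Int.rec with
  | ofNat k =>
      cases k with
      | zero => simpa using der_one d hder
      | succ k =>
          have e : y ^ ((Int.ofNat (k+1))) = y^(k+1) := by
            rw [show (Int.ofNat (k+1)) = ((k+1 : ℕ) : ℤ) from rfl, zpow_natCast]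
          have e2 : y ^ ((Int.ofNat (k+1)) - 1) = y^k := by
            rw [show (Int.ofNat (k+1)) - 1 = ((k : ℕ) : ℤ) by simp, zpow_natCast]
          rw [e, e2, der_pow d hder y k]
          push_cast [Int.ofNat_eq_natCast]
          ring
  | negSucc k =>
      set j : ℤ := Int.negSucc k with hj
      have hneg : j = -((k:ℤ)+1) := by rw [hj, Int.negSucc_eq]
      have h0 : y^(k+1) * y^j = 1 := by
        rw [← zpow_natCast y (k+1), ← zpow_add₀ hy]
        rw [show ((k+1 : ℕ) : ℤ) + j = 0 by rw [hneg]; push_cast; ring, zpow_zero]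
      have h1 : (0:ℝ) = d (y^(k+1)) * y^j + y^(k+1) * d (y^j) := by
        rw [← hder, h0, der_one d hder]
      have h2 : d (y^(k+1)) = (k+1:ℝ) * y^k * d y := der_pow d hder y k
      have hzk : y^(k+1) = y^((k+1:ℤ)) := by
        rw [show ((k+1:ℤ)) = ((k+1:ℕ):ℤ) by push_cast; ring, zpow_natCast]
      have hznk : y^(k:ℕ) = y^((k:ℤ)) := by rw [zpow_natCast]
      have hjr : (j:ℝ) = -((k:ℝ)+1) := by rw [hneg]; push_cast; ring
      have c1 : y^((k:ℤ)) * y^j = y^((k:ℤ) + j) := (zpow_add₀ hy _ _).symm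
      have c2 : y^((k+1:ℤ)) * y^(j-1) = y^((k:ℤ) + j) := by
        rw [← zpow_add₀ hy]; congr 1; omega
      have key : y^((k+1:ℤ)) * d (y^j) = y^((k+1:ℤ)) * ((j:ℝ) * y^(j-1) * d y) := by
        have lhs : y^((k+1:ℤ)) * d (y^j) = -(d (y^(k+1)) * y^j) := by
          rw [← hzk]; linarith [h1]
        rw [lhs, h2, hznk]
        calc -((k+1:ℝ) * y^((k:ℤ)) * d y * y^j)
            = -((k:ℝ)+1) * (y^((k:ℤ)) * y^j) * d y := by ring
          _ = (j:ℝ) * (y^((k+1:ℤ)) * y^(j-1)) * d y := by rw [c1, c2, hjr]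
          _ = y^((k+1:ℤ)) * ((j:ℝ) * y^(j-1) * d y) := by ring
      exact mul_left_cancel₀ (zpow_ne_zero _ hy) key


lemma Zneg (d : ℝ → ℝ) (hd : ∀ x y : ℝ, d (x + y) = d x + d y) (m n : ℤ) (s : ℝ)
    (h : (n:ℝ) * d ((-s)^m) = (m:ℝ) * (-s)^(m-n) * d ((-s)^n)) :
    (n:ℝ) * d (s^m) = (m:ℝ) * s^(m-n) * d (s^n) := by
  rcases Int.even_or_odd m with hm | hm <;> rcases Int.even_or_odd n with hn | hn
  · have h1 : Even (m - n) := hm.sub hn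
    rwa [hm.neg_zpow, hn.neg_zpow, h1.neg_zpow] at h
  · have h1 : Odd (m - n) := hm.sub_odd hn
    rw [hm.neg_zpow, hn.neg_zpow, h1.neg_zpow, d_neg d hd] at h
    linarith [h]
  · have h1 : Odd (m - n) := hm.sub_even hn
    rw [hm.neg_zpow, hn.neg_zpow, h1.neg_zpow, d_neg d hd] at h
    linarith [h]
  · have h1 : Even (m - n) := hm.sub_odd hn
    rw [hm.neg_zpow, hn.neg_zpow, h1.neg_zpow, d_neg d hd, d_neg d hd] at h
    linarith [h]

lemma Zscale (d : ℝ → ℝ) (hd : ∀ x y : ℝ, d (x + y) = d x + d y) (m n : ℤ) (q : ℚ) (hq : q ≠ 0)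
    (s : ℝ) (hs : s ≠ 0)
    (h : (n:ℝ) * d (((q:ℝ)*s)^m) = (m:ℝ) * ((q:ℝ)*s)^(m-n) * d (((q:ℝ)*s)^n)) :
    (n:ℝ) * d (s^m) = (m:ℝ) * s^(m-n) * d (s^n) := by
  have hqR : (q:ℝ) ≠ 0 := Rat.cast_ne_zero.mpr hq
  have edz : ∀ j : ℤ, d (((q:ℝ)*s)^j) = ((q^j : ℚ) : ℝ) * d (s^j) := by
    intro j
    rw [mul_zpow, show ((q:ℝ))^j = ((q^j : ℚ) : ℝ) by push_cast; ring, d_rat d hd]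
  rw [edz, edz, mul_zpow] at h
  have hqm : ((q^m : ℚ) : ℝ) ≠ 0 := by
    rw [Rat.cast_ne_zero]
    exact zpow_ne_zero m hq
  apply mul_left_cancel₀ hqm
  calc ((q^m : ℚ) : ℝ) * ((n:ℝ) * d (s^m)) = (n:ℝ) * (((q^m : ℚ) : ℝ) * d (s^m)) := by ring
    _ = (m:ℝ) * ((q:ℝ)^(m-n) * s^(m-n)) * (((q^n:ℚ):ℝ) * d (s^n)) := h
    _ = ((q^m : ℚ) : ℝ) * ((m:ℝ) * s^(m-n) * d (s^n)) := by
        have hqq : ((q:ℝ))^(m-n) * ((q:ℝ))^n = ((q:ℝ))^m := by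
          rw [← zpow_add₀ hqR]; congr 1; ring
        push_cast
        linear_combination ((m:ℝ) * s^(m-n) * d (s^n)) * hqq

lemma exists_rat_scale (a b : ℝ) (n : ℕ) (hn : n ≠ 0)
    (hc : ∃ c ∈ Set.Ioo a b, c ≠ 0 ∧ (¬ Odd n → 0 < c)) (s : ℝ) (hs : s ≠ 0) :
    ∃ q : ℚ, (q:ℝ) ≠ 0 ∧ ((q:ℝ) * s)^n ∈ Set.Ioo a b := by
  obtain ⟨c, hcI, hc0, hcpos⟩ := hc
  set w := s^n with hw
  have hwne : w ≠ 0 := pow_ne_zero n hs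
  have hcw : c / w ≠ 0 := div_ne_zero hc0 hwne
  set W : Set ℝ := ((fun ρ : ℝ => ρ^n * w) ⁻¹' (Set.Ioo a b)) ∩ {(0:ℝ)}ᶜ with hW
  have hWopen : IsOpen W := by
    apply IsOpen.inter _ isOpen_compl_singleton
    apply IsOpen.preimage _ isOpen_Ioo
    exact (continuous_pow n).mul continuous_const
  have hcroot : croot (c/w) n ^ n = c / w := by
    apply croot_pow _ _ hn
    intro hneg
    by_contra hodd
    have hwpos : 0 < w := by
      rw [hw]
      exact (Nat.not_odd_iff_even.mp hodd).pow_pos hs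
    have := hcpos hodd
    have : 0 < c / w := div_pos this hwpos
    linarith
  have hρW : croot (c/w) n ∈ W := by
    constructor
    · show croot (c/w) n ^ n * w ∈ Set.Ioo a b
      rw [hcroot, div_mul_cancel₀ _ hwne]
      exact hcI
    · show croot (c/w) n ≠ 0
      intro habs
      rw [← hcroot, habs] at hcw
      simp at hcw
      exact hn hcw
  obtain ⟨q, hqW⟩ := (Rat.denseRange_cast (𝕜 := ℝ)).exists_mem_open hWopen ⟨_, hρW⟩
  refine ⟨q, hqW.2, ?_⟩
  have hm := hqW.1
  rw [Set.mem_preimage] at hm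
  rw [mul_pow]
  exact hm

lemma qdom_even_subset (r : ℚ) (h : ¬ Odd r.den) : qdom r ⊆ Set.Ici 0 := by
  unfold qdom
  rw [if_neg h]
  by_cases h2 : 0 ≤ r.num
  · rw [if_pos h2]
  · rw [if_neg h2]; exact Set.Ioi_subset_Ici_self

theorem stmt_5 (d : ℝ → ℝ) (hd : ∀ x y : ℝ, d (x + y) = d x + d y)
    (r : ℚ) (hr0 : r ≠ 0) (hr1 : r ≠ 1)
    (a b : ℝ) (hab : a < b) (hI : Set.Ioo a b ⊆ qdom r) :
    (∀ x y : ℝ, d (x * y) = d x * y + x * d y) ↔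
      (∀ x ∈ Set.Ioo a b, d (qpow x r) = (r : ℝ) * qpow x (r - 1) * d x) := by
  have hden : r.den ≠ 0 := r.den_pos.ne'
  have hdenR : ((r.den:ℝ)) ≠ 0 := by exact_mod_cast hden
  constructor
  · -- forward: derivation implies power rule
    intro hder x hx
    by_cases hx0 : x = 0
    · subst hx0
      have hd0 : d 0 = 0 := d_zero d hd
      have hq0 : qpow 0 r = 0 := by
        unfold qpow
        rw [if_pos le_rfl, Real.zero_rpow (by exact_mod_cast hr0)]
      rw [hq0, hd0]
      simp
    · have hdom : x ∈ qdom r := hI hx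
      have hoddn : x < 0 → Odd r.den := qdom_neg_odd r x hdom
      set tc := croot x r.den with htcdef
      have htc : tc ≠ 0 := croot_ne_zero x r.den hx0 hden
      have e1 : qpow x r = tc ^ r.num := qpow_eq_zpow x r hoddn
      have e2 : qpow x (r-1) = tc ^ (r.num - r.den) := by
        have h := qpow_eq_zpow x (r-1) (by rw [(rsub1 r).2]; exact hoddn)
        rw [(rsub1 r).1, (rsub1 r).2] at h
        exact h
      have e4 : x = tc ^ ((r.den : ℤ)) := by
        rw [zpow_natCast]; exact (croot_pow x r.den hden hoddn).symm
      rw [e1, e2, show d x = d (tc ^ ((r.den:ℤ))) from by rw [← e4]]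
      rw [der_zpow d hder tc htc r.num, der_zpow d hder tc htc (r.den:ℤ)]
      have hcomb : tc^(r.num - r.den) * tc^((r.den:ℤ)-1) = tc^(r.num - 1) := by
        rw [← zpow_add₀ htc]; congr 1; ring
      rw [Rat.cast_def, ← hcomb]
      field_simp
      push_cast
      ring
  · -- backward
    intro h
    have hm0 : r.num ≠ 0 := Rat.num_ne_zero.mpr hr0
    have hmn : r.num ≠ (r.den:ℤ) := by
      intro habs
      apply hr1
      rw [← Rat.num_div_den r, habs]
      push_cast
      rw [div_self (by exact_mod_cast hden)]
    have hcop' : r.num = -((r.den:ℤ)) → (r.den:ℤ) = 1 := by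
      intro habs
      have h2 := r.reduced
      rw [habs, Int.natAbs_neg, Int.natAbs_natCast] at h2
      have h3 : r.den = 1 := by rwa [Nat.Coprime, Nat.gcd_self] at h2
      exact_mod_cast h3
    have hc : ∃ c ∈ Set.Ioo a b, c ≠ 0 ∧ (¬ Odd r.den → 0 < c) := by
      by_cases hodd : Odd r.den
      · by_cases hmid : (a+b)/2 = 0
        · have hb' : b = -a := by linarith
          have ha' : a < 0 := by linarith
          exact ⟨a/2, ⟨by linarith, by linarith⟩, by intro hz; linarith,
            fun hcon => absurd hodd hcon⟩
        · exact ⟨(a+b)/2, ⟨by linarith, by linarith⟩, hmid, fun hcon => absurd hodd hcon⟩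
      · have hsub := hI.trans (qdom_even_subset r hodd)
        have hz : (a+b)/2 ∈ Set.Ioo a b := ⟨by linarith, by linarith⟩
        have hz0 : (0:ℝ) ≤ (a+b)/2 := hsub hz
        have hb : 0 < b := by
          rcases hz with ⟨_, h2⟩
          linarith
        by_cases ha : 0 < a
        · exact ⟨(a+b)/2, hz, by intro hzz; linarith, fun _ => by linarith⟩
        · push_neg at ha
          exact ⟨b/2, ⟨by linarith, by linarith⟩, by intro hzz; linarith, fun _ => by linarith⟩
    have hZ : ZRel d r.num ((r.den:ℤ)) := by
      intro t ht
      obtain ⟨q, hq0, hqin⟩ := exists_rat_scale a b r.den hden hc t ht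
      set u := (q:ℝ) * t with hu
      have hu0 : u ≠ 0 := mul_ne_zero hq0 ht
      set x := u ^ r.den with hx
      have hx0 : x ≠ 0 := pow_ne_zero _ hu0
      have hdom : x ∈ qdom r := hI hqin
      have hoddn : x < 0 → Odd r.den := qdom_neg_odd r x hdom
      set tc := croot x r.den with htcdef
      have htc : tc ≠ 0 := croot_ne_zero x r.den hx0 hden
      have e1 : qpow x r = tc ^ r.num := qpow_eq_zpow x r hoddn
      have e2 : qpow x (r-1) = tc ^ (r.num - r.den) := by
        have h' := qpow_eq_zpow x (r-1) (by rw [(rsub1 r).2]; exact hoddn)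
        rw [(rsub1 r).1, (rsub1 r).2] at h'
        exact h'
      have e4 : x = tc ^ ((r.den : ℤ)) := by
        rw [zpow_natCast]; exact (croot_pow x r.den hden hoddn).symm
      have hrel := h x hqin
      rw [e1, e2, show d x = d (tc ^ ((r.den:ℤ))) from by rw [← e4], Rat.cast_def] at hrel
      have hrelZ : ((r.den:ℤ):ℝ) * d (tc ^ r.num)
          = ((r.num):ℝ) * tc^(r.num - (r.den:ℤ)) * d (tc^((r.den:ℤ))) := by
        push_cast
        rw [hrel]
        field_simp
      have htc_eq : tc = u ∨ tc = -u := by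
        rw [htcdef, hx]
        exact croot_of_pow u r.den hu0 hden
      have hrelu : ((r.den:ℤ):ℝ) * d (u ^ r.num)
          = ((r.num):ℝ) * u^(r.num - (r.den:ℤ)) * d (u^((r.den:ℤ))) := by
        rcases htc_eq with heq | heq
        · rwa [heq] at hrelZ
        · rw [heq] at hrelZ
          exact Zneg d hd r.num ((r.den:ℤ)) u hrelZ
      exact Zscale d hd r.num ((r.den:ℤ)) q (by exact_mod_cast hq0) t ht hrelu
    exact back d hd r.num ((r.den:ℤ)) (by exact_mod_cast r.den_pos) hm0 hmn hcop' hZ
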